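/- Let α ∈ (0,1), R > 0 and T > 0. There exists a constant C = C(α,R,T) > 0 such that for every τ ∈ (0,T], ∫_{-R/12}^{R/12} e^{-z^2/τ} g'(z) dz ≥ C τ^{α/2}, where g'(z) = α z^{α−1} for z ∈ (0,1) and g'(z) = 0 otherwise. -/

import Mathlib

open MeasureTheory Real intervalIntegral

/-- Gaussian lower bound: `∫_{-R/12}^{R/12} e^{-z²/τ} g'(z) dz ≥ C τ^{α/2}` for
`τ ∈ (0,T]`, where `g'(z) = α z^{α-1}` on `(0,1)` and `0` otherwise. -/
theorem stmt_11 (α R T : ℝ) (hα : α ∈ Set.Ioo (0 : ℝ) 1) (hR : 0 < R) (hT : 0 < T)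
    (g' : ℝ → ℝ)
    (hg1 : ∀ z : ℝ, 0 < z → z < 1 → g' z = α * z ^ (α - 1))
    (hg2 : ∀ z : ℝ, z ≤ 0 ∨ 1 ≤ z → g' z = 0) :
    ∃ C : ℝ, 0 < C ∧
      ∀ τ : ℝ, 0 < τ → τ ≤ T →
        C * τ ^ (α / 2) ≤ ∫ z in (-(R / 12))..(R / 12), Real.exp (-z ^ 2 / τ) * g' z := by
  obtain ⟨hα0, hα1⟩ := hα
  -- g' is fully determined
  have hg : ∀ z, g' z = if z ∈ Set.Ioo (0:ℝ) 1 then α * z ^ (α - 1) else 0 := by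
    intro z
    by_cases h : z ∈ Set.Ioo (0:ℝ) 1
    · rw [if_pos h]; exact hg1 z h.1 h.2
    · rw [if_neg h]
      apply hg2
      simp only [Set.mem_Ioo, not_and_or, not_lt] at h
      exact h
  set r : ℝ := min (R / 12) (1 / 2) with hr_def
  have hr0 : 0 < r := lt_min (by linarith) (by norm_num)
  set c : ℝ := min (r / Real.sqrt T) 1 with hc_def
  have hsT0 : 0 < Real.sqrt T := Real.sqrt_pos.mpr hT
  have hc0 : 0 < c := lt_min (div_pos hr0 hsT0) one_pos
  refine ⟨Real.exp (-1) * c ^ α, mul_pos (Real.exp_pos _) (Real.rpow_pos_of_pos hc0 _), ?_⟩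
  intro τ hτ hτT
  set m : ℝ := min r (Real.sqrt τ) with hm_def
  have hsτ0 : 0 < Real.sqrt τ := Real.sqrt_pos.mpr hτ
  have hm0 : 0 < m := lt_min hr0 hsτ0
  have hm_r : m ≤ r := min_le_left _ _
  have hm_half : m ≤ 1 / 2 := le_trans hm_r (min_le_right _ _)
  have hmR : m ≤ R / 12 := le_trans hm_r (min_le_left _ _)
  have hm_sq : m ^ 2 ≤ τ := by
    have h1 : m ≤ Real.sqrt τ := min_le_right _ _
    nlinarith [Real.sq_sqrt hτ.le, Real.sqrt_nonneg τ]
  set F : ℝ → ℝ := fun z => Real.exp (-z ^ 2 / τ) *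
    (if z ∈ Set.Ioo (0:ℝ) 1 then α * z ^ (α - 1) else 0) with hF_def
  have hFnn : ∀ z, 0 ≤ F z := by
    intro z
    apply mul_nonneg (Real.exp_nonneg _)
    split
    · rename_i h
      exact mul_nonneg hα0.le (Real.rpow_nonneg h.1.le _)
    · exact le_rfl
  have hmeas : Measurable F := by
    apply Measurable.mul
    · fun_prop
    · exact Measurable.ite measurableSet_Ioo (by fun_prop) measurable_const
  have hα1' : (-1:ℝ) < α - 1 := by linarith
  -- integrability of F on any interval
  have hint : ∀ a b : ℝ, IntervalIntegrable F volume a b := by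
    intro a b
    apply IntervalIntegrable.mono_fun (intervalIntegrable_rpow' hα1')
      hmeas.aestronglyMeasurable
    filter_upwards with x
    by_cases h : x ∈ Set.Ioo (0:ℝ) 1
    · have hx0 : 0 < x := h.1
      have hxp : (0:ℝ) ≤ x ^ (α - 1) := Real.rpow_nonneg hx0.le _
      have he1 : Real.exp (-x ^ 2 / τ) ≤ 1 := by
        apply Real.exp_le_one_iff.mpr
        rw [neg_div]
        have : 0 ≤ x ^ 2 / τ := div_nonneg (sq_nonneg x) hτ.le
        linarith
      have he0 : 0 ≤ Real.exp (-x ^ 2 / τ) := Real.exp_nonneg _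
      simp only [hF_def, if_pos h, Real.norm_eq_abs]
      rw [abs_of_nonneg (by positivity), abs_of_nonneg hxp]
      calc Real.exp (-x ^ 2 / τ) * (α * x ^ (α - 1))
          ≤ 1 * (α * x ^ (α - 1)) :=
            mul_le_mul_of_nonneg_right he1 (by positivity)
        _ = α * x ^ (α - 1) := one_mul _
        _ ≤ 1 * x ^ (α - 1) := mul_le_mul_of_nonneg_right hα1.le hxp
        _ = x ^ (α - 1) := one_mul _
    · simp only [hF_def, if_neg h, mul_zero, norm_zero]
      exact norm_nonneg _
  -- lower comparison function on [0, m]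
  set G : ℝ → ℝ := fun z => Real.exp (-1) * (α * z ^ (α - 1)) with hG_def
  have hGint : IntervalIntegrable G volume 0 m := by
    have := ((intervalIntegrable_rpow' hα1' (a := (0:ℝ)) (b := m))).const_mul
      (Real.exp (-1) * α)
    apply this.congr
    intro x _
    simp [hG_def, mul_assoc]
  -- step 2: pointwise bound on [0,m]
  have step2 : (∫ z in (0:ℝ)..m, G z) ≤ ∫ z in (0:ℝ)..m, F z := by
    apply integral_mono_on hm0.le hGint (hint 0 m)
    intro x hx
    rcases eq_or_lt_of_le hx.1 with heq | hx0
    · simp [hG_def, hF_def, ← heq, Real.zero_rpow (by linarith : α - 1 ≠ 0)]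
    · have hx1 : x < 1 := lt_of_le_of_lt hx.2 (by linarith)
      have hmem : x ∈ Set.Ioo (0:ℝ) 1 := ⟨hx0, hx1⟩
      simp only [hG_def, hF_def, if_pos hmem]
      apply mul_le_mul_of_nonneg_right _ (mul_nonneg hα0.le (Real.rpow_nonneg hx0.le _))
      apply Real.exp_le_exp.mpr
      rw [neg_div, neg_le_neg_iff, div_le_one hτ]
      nlinarith [hx.2]
  -- step 3: compute ∫ G
  have step3 : (∫ z in (0:ℝ)..m, G z) = Real.exp (-1) * m ^ α := by
    have hGe : G = fun z => (Real.exp (-1) * α) * z ^ (α - 1) := by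
      funext z; simp [hG_def, mul_assoc]
    rw [hGe, intervalIntegral.integral_const_mul, integral_rpow (Or.inl hα1')]
    have h1 : α - 1 + 1 = α := by ring
    rw [h1, Real.zero_rpow hα0.ne', sub_zero]
    field_simp
  -- step 1: extend integral to the full interval
  have step1 : (∫ z in (0:ℝ)..m, F z) ≤ ∫ z in (-(R / 12))..(R / 12), F z := by
    apply integral_mono_interval (by linarith) hm0.le hmR
    · filter_upwards with x using hFnn x
    · exact hint _ _
  -- step 4: the constant comparison
  have step4 : Real.exp (-1) * c ^ α * τ ^ (α / 2) ≤ Real.exp (-1) * m ^ α := by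
    have hcs : c * Real.sqrt τ ≤ m := by
      apply le_min
      · have h1 : c ≤ r / Real.sqrt T := min_le_left _ _
        have h2 : Real.sqrt τ ≤ Real.sqrt T := Real.sqrt_le_sqrt hτT
        have h3 : c * Real.sqrt τ ≤ (r / Real.sqrt T) * Real.sqrt T := by
          nlinarith
        rwa [div_mul_cancel₀ _ hsT0.ne'] at h3
      · have h1 : c ≤ 1 := min_le_right _ _
        nlinarith
    have hτα : τ ^ (α / 2) = (Real.sqrt τ) ^ α := by
      rw [Real.sqrt_eq_rpow, show α / 2 = (1 / 2) * α by ring, Real.rpow_mul hτ.le]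
    have key : c ^ α * τ ^ (α / 2) ≤ m ^ α := by
      rw [hτα, ← Real.mul_rpow hc0.le (Real.sqrt_nonneg τ)]
      exact Real.rpow_le_rpow (by positivity) hcs hα0.le
    calc Real.exp (-1) * c ^ α * τ ^ (α / 2)
        = Real.exp (-1) * (c ^ α * τ ^ (α / 2)) := by ring
      _ ≤ Real.exp (-1) * m ^ α :=
          mul_le_mul_of_nonneg_left key (Real.exp_nonneg _)
  -- assemble
  have hmain : (∫ z in (-(R / 12))..(R / 12), Real.exp (-z ^ 2 / τ) * g' z)
      = ∫ z in (-(R / 12))..(R / 12), F z := by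
    apply intervalIntegral.integral_congr
    intro x _
    simp only [hg]
    rfl
  rw [hmain]
  calc Real.exp (-1) * c ^ α * τ ^ (α / 2) ≤ Real.exp (-1) * m ^ α := step4
    _ = ∫ z in (0:ℝ)..m, G z := step3.symm
    _ ≤ ∫ z in (0:ℝ)..m, F z := step2
    _ ≤ _ := step1
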